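/- Let X ∈ R^p be a continuous random vector such that for every unit vector s, the CDF F_{s^T X} is (uniformly) continuous. Let U_i = F_{s_i^T X}(s_i^T X) for unit vectors s_1, s_2. Then |U_1 - U_2| → 0 in probability as ||s_1 - s_2|| → 0. -/

import Mathlib

open MeasureTheory ProbabilityTheory Filter
open scoped Topology ENNReal NNReal RealInnerProductSpace

noncomputable section

/-- `k`-th binary digit of `u` (for `k ≥ 1`). -/
def bdigit (k : ℕ) (u : ℝ) : ℝ := if ⌊u * 2 ^ k⌋ % 2 = 1 then 1 else 0

def sdig (k : ℕ) (u : ℝ) : ℝ := 2 * bdigit k u - 1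

def inter (d : ℕ) (a : Finset (Fin d)) (u : ℝ) : ℝ := ∏ k ∈ a, sdig (k.1 + 1) u

def trunc (d : ℕ) (u : ℝ) : ℝ := ∑ k ∈ Finset.range d, bdigit (k + 1) u / 2 ^ (k + 1)

def Cd (d : ℕ) : Finset (Finset (Fin d) × Finset (Fin d)) :=
  Finset.univ.filter fun p => p.1 ≠ ∅ ∧ p.2 ≠ ∅

def BdUV {Ω : Type*} [MeasurableSpace Ω] (μ : Measure Ω) (d : ℕ) (U V : Ω → ℝ) : ℝ :=
  (((2 : ℝ) ^ d - 1)⁻¹) ^ 2 *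
    ∑ p ∈ Cd d, (∫ ω, inter d p.1 (U ω) * inter d p.2 (V ω) ∂μ) ^ 2

/-- Euclidean space ℝ^p. -/
abbrev Euc (p : ℕ) := EuclideanSpace ℝ (Fin p)

/-- CDF-transform of the projection of `X` on direction `s`. -/
def projCDF {Ω : Type*} [MeasurableSpace Ω] (μ : Measure Ω) {p : ℕ}
    (X : Ω → Euc p) (s : Euc p) (ω : Ω) : ℝ :=
  cdf (μ.map fun ω' => ⟪s, X ω'⟫) ⟪s, X ω⟫

/-- Dependence measure of the projected pair `(s^T X, t^T Y)`. -/
def BdProj {Ω : Type*} [MeasurableSpace Ω] (μ : Measure Ω) (d : ℕ) {p q : ℕ}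
    (X : Ω → Euc p) (Y : Ω → Euc q) (s : Euc p) (t : Euc q) : ℝ :=
  BdUV μ d (projCDF μ X s) (projCDF μ Y t)


/-- If every projection CDF of `X` is uniformly continuous, then
with `U_i = F_{s_i^T X}(s_i^T X)`, `|U₁ - U₂| → 0` in probability as
`‖s₁ - s₂‖ → 0`. -/
theorem stmt10 {Ω : Type*} [MeasurableSpace Ω] (μ : Measure Ω) [IsProbabilityMeasure μ]
    {p : ℕ} (X : Ω → Euc p) (hX : Measurable X)
    (hcdf : ∀ s : Euc p, ‖s‖ = 1 →
      UniformContinuous fun w => cdf (μ.map fun ω => ⟪s, X ω⟫) w) :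
    ∀ s₁ : Euc p, ‖s₁‖ = 1 → ∀ ε > (0 : ℝ), ∀ κ > (0 : ℝ), ∃ η > (0 : ℝ),
      ∀ s₂ : Euc p, ‖s₂‖ = 1 → ‖s₁ - s₂‖ < η →
        (μ {ω | ε < |projCDF μ X s₁ ω - projCDF μ X s₂ ω|}).toReal < κ := by
  
  intro s₁ hs₁ ε hε κ hκ
  -- uniform continuity modulus
  obtain ⟨δ, hδ, hδuc⟩ := Metric.uniformContinuous_iff.mp (hcdf s₁ hs₁) (ε / 4) (by positivity)
  -- tail bound
  have hXn : Measurable fun ω => ‖X ω‖ := hX.norm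
  set c : ℝ := min (ε / 4) κ with hc
  have hc0 : 0 < c := lt_min (by positivity) hκ
  obtain ⟨M, hM0, hMtail⟩ :
      ∃ M : ℝ, 0 < M ∧ (μ {ω | M < ‖X ω‖}).toReal < c := by
    have hanti : Antitone fun n : ℕ => {ω | (n : ℝ) < ‖X ω‖} := by
      intro m n hmn ω hω
      simp only [Set.mem_setOf_eq] at hω ⊢
      have : (m : ℝ) ≤ (n : ℝ) := by exact_mod_cast hmn
      linarith
    have hempty : (⋂ n : ℕ, {ω | (n : ℝ) < ‖X ω‖}) = ∅ := by
      ext ω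
      simp only [Set.mem_iInter, Set.mem_setOf_eq, Set.mem_empty_iff_false, iff_false, not_forall,
        not_lt]
      obtain ⟨n, hn⟩ := exists_nat_ge ‖X ω‖
      exact ⟨n, hn⟩
    have htendsto := tendsto_measure_iInter_atTop
      (fun n => ((measurableSet_lt measurable_const hXn)).nullMeasurableSet)
      hanti ⟨0, measure_ne_top μ _⟩
    rw [hempty, measure_empty] at htendsto
    have : ∀ᶠ n : ℕ in atTop, μ {ω | (n : ℝ) < ‖X ω‖} < ENNReal.ofReal c := by
      exact htendsto.eventually_lt_const (by simp [hc0])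
    obtain ⟨n, hn⟩ := this.exists
    refine ⟨(n : ℝ) + 1, by positivity, ?_⟩
    have hsub : {ω | (n : ℝ) + 1 < ‖X ω‖} ⊆ {ω | (n : ℝ) < ‖X ω‖} := by
      intro ω hω
      simp only [Set.mem_setOf_eq] at hω ⊢
      linarith
    have h1 : μ {ω | (n : ℝ) + 1 < ‖X ω‖} < ENNReal.ofReal c :=
      lt_of_le_of_lt (measure_mono hsub) hn
    have := ENNReal.toReal_lt_of_lt_ofReal h1
    convert this using 3 <;> push_cast <;> ring
  refine ⟨δ / 2 / M, by positivity, ?_⟩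
  intro s₂ hs₂ hclose
  -- notation
  set Z₁ : Ω → ℝ := fun ω => ⟪s₁, X ω⟫ with hZ₁
  set Z₂ : Ω → ℝ := fun ω => ⟪s₂, X ω⟫ with hZ₂
  have hZ₁m : Measurable Z₁ := measurable_const.inner hX
  have hZ₂m : Measurable Z₂ := measurable_const.inner hX
  have hmap₁ : IsProbabilityMeasure (μ.map Z₁) := Measure.isProbabilityMeasure_map hZ₁m.aemeasurable
  have hmap₂ : IsProbabilityMeasure (μ.map Z₂) := Measure.isProbabilityMeasure_map hZ₂m.aemeasurable
  set F₁ : ℝ → ℝ := fun w => cdf (μ.map Z₁) w with hF₁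
  set F₂ : ℝ → ℝ := fun w => cdf (μ.map Z₂) w with hF₂
  set A : Set Ω := {ω | δ / 2 < |Z₁ ω - Z₂ ω|} with hA
  set T : Set Ω := {ω | M < ‖X ω‖} with hT
  -- A ⊆ T
  have hAT : A ⊆ T := by
    intro ω hω
    simp only [hA, Set.mem_setOf_eq] at hω
    have hinner : Z₁ ω - Z₂ ω = ⟪s₁ - s₂, X ω⟫ := by
      simp [hZ₁, hZ₂, inner_sub_left]
    rw [hinner] at hω
    have hb := abs_real_inner_le_norm (s₁ - s₂) (X ω)
    by_contra hnot
    simp only [hT, Set.mem_setOf_eq, not_lt] at hnot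
    have h1 : ‖s₁ - s₂‖ * ‖X ω‖ ≤ ‖s₁ - s₂‖ * M := mul_le_mul_of_nonneg_left hnot (norm_nonneg _)
    have h2 : ‖s₁ - s₂‖ * M < δ / 2 / M * M := mul_lt_mul_of_pos_right hclose hM0
    rw [div_mul_cancel₀ _ (ne_of_gt hM0)] at h2
    linarith
  have hμA : (μ A).toReal ≤ (μ T).toReal :=
    ENNReal.toReal_mono (measure_ne_top μ _) (measure_mono hAT)
  have hμAc : (μ A).toReal < c := lt_of_le_of_lt hμA hMtail
  -- sup bound: ∀ w, |F₁ w - F₂ w| ≤ ε/4 + (μ A).toReal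
  have hcdf₁ : ∀ w, F₁ w = (μ (Z₁ ⁻¹' Set.Iic w)).toReal := by
    intro w
    rw [hF₁]
    simp only
    rw [cdf_eq_real, Measure.real_def, Measure.map_apply hZ₁m measurableSet_Iic]
  have hcdf₂ : ∀ w, F₂ w = (μ (Z₂ ⁻¹' Set.Iic w)).toReal := by
    intro w
    rw [hF₂]
    simp only
    rw [cdf_eq_real, Measure.real_def, Measure.map_apply hZ₂m measurableSet_Iic]
  -- helper: enlarge
  have henl : ∀ w, μ (Z₂ ⁻¹' Set.Iic w) ≤ μ (Z₁ ⁻¹' Set.Iic (w + δ / 2)) + μ A := by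
    intro w
    refine le_trans (measure_mono ?_) (measure_union_le _ _)
    intro ω hω
    by_cases hωA : ω ∈ A
    · exact Or.inr hωA
    · left
      simp only [hA, Set.mem_setOf_eq, not_lt] at hωA
      simp only [Set.mem_preimage, Set.mem_Iic] at hω ⊢
      have := abs_le.mp hωA
      linarith [this.1, this.2]
  have henl' : ∀ w, μ (Z₁ ⁻¹' Set.Iic (w - δ / 2)) ≤ μ (Z₂ ⁻¹' Set.Iic w) + μ A := by
    intro w
    refine le_trans (measure_mono ?_) (measure_union_le _ _)
    intro ω hω
    by_cases hωA : ω ∈ A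
    · exact Or.inr hωA
    · left
      simp only [hA, Set.mem_setOf_eq, not_lt] at hωA
      simp only [Set.mem_preimage, Set.mem_Iic] at hω ⊢
      have := abs_le.mp hωA
      linarith [this.1, this.2]
  have htoReal_add : ∀ (S S' : Set Ω), μ S ≤ μ S' + μ A →
      (μ S).toReal ≤ (μ S').toReal + (μ A).toReal := by
    intro S S' h
    have := ENNReal.toReal_mono (by finiteness) h
    rwa [ENNReal.toReal_add (measure_ne_top μ _) (measure_ne_top μ _)] at this
  have hF₁near : ∀ w w' : ℝ, |w - w'| < δ → |F₁ w - F₁ w'| < ε / 4 := by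
    intro w w' h
    have := hδuc (a := w) (b := w') (by rwa [Real.dist_eq])
    rwa [Real.dist_eq] at this
  have hsup : ∀ w, |F₁ w - F₂ w| ≤ ε / 4 + (μ A).toReal := by
    intro w
    rw [abs_sub_le_iff]
    constructor
    · -- F₁ w - F₂ w ≤ ε/4 + μ A, using henl' : F₁(w - δ/2) ≤ F₂ w + μ A
      have h1 := htoReal_add _ _ (henl' w)
      rw [← hcdf₁, ← hcdf₂] at h1
      have h2 : |F₁ w - F₁ (w - δ / 2)| < ε / 4 := hF₁near w (w - δ / 2) (by
        rw [abs_of_pos] <;> [skip; linarith] ; linarith)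
      have := abs_le.mp h2.le
      linarith [this.2]
    · have h1 := htoReal_add _ _ (henl w)
      rw [← hcdf₁, ← hcdf₂] at h1
      have h2 : |F₁ (w + δ / 2) - F₁ w| < ε / 4 := hF₁near (w + δ / 2) w (by
        rw [abs_of_pos] <;> [skip; linarith] ; linarith)
      have := abs_le.mp h2.le
      linarith [this.2]
  -- pointwise bound off A
  have hpt : ∀ ω, ω ∉ A → |projCDF μ X s₁ ω - projCDF μ X s₂ ω| ≤ ε := by
    intro ω hωA
    simp only [hA, Set.mem_setOf_eq, not_lt] at hωA
    have e₁ : projCDF μ X s₁ ω = F₁ (Z₁ ω) := rfl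
    have e₂ : projCDF μ X s₂ ω = F₂ (Z₂ ω) := rfl
    rw [e₁, e₂]
    have h1 : |F₁ (Z₁ ω) - F₁ (Z₂ ω)| < ε / 4 :=
      hF₁near _ _ (lt_of_le_of_lt hωA (by linarith))
    have h2 : |F₁ (Z₂ ω) - F₂ (Z₂ ω)| ≤ ε / 4 + (μ A).toReal := hsup _
    have hAle : (μ A).toReal ≤ ε / 4 := le_of_lt (lt_of_lt_of_le hμAc (min_le_left _ _))
    calc |F₁ (Z₁ ω) - F₂ (Z₂ ω)|
        ≤ |F₁ (Z₁ ω) - F₁ (Z₂ ω)| + |F₁ (Z₂ ω) - F₂ (Z₂ ω)| := abs_sub_le _ _ _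
      _ ≤ ε := by linarith
  -- conclude
  have hsubset : {ω | ε < |projCDF μ X s₁ ω - projCDF μ X s₂ ω|} ⊆ A := by
    intro ω hω
    by_contra hωA
    exact absurd (hpt ω hωA) (not_le.mpr hω)
  calc (μ {ω | ε < |projCDF μ X s₁ ω - projCDF μ X s₂ ω|}).toReal
      ≤ (μ A).toReal := ENNReal.toReal_mono (measure_ne_top μ _) (measure_mono hsubset)
    _ < c := hμAc
    _ ≤ κ := min_le_right _ _
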